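/- Let ψ₀ = E[Y₁] − E[Y₁⁽⁰⁾] and define the estimator ψ̂ᵉᑫ² = Y₁ − (F₁ / Σ_{i=2}^{J+1} Fᵢ) · Σ_{i=2}^{J+1} Yᵢ. Assume: (i) consistency (Yᵢ = Yᵢ⁽⁰⁾ almost surely for i = 2, …, J+1); (ii) logarithmic equi-confounding: E[Y₁⁽⁰⁾] / E[Σ_{i=2}^{J+1} Yᵢ⁽⁰⁾] = E[F₁] / E[Σ_{i=2}^{J+1} Fᵢ]; (iii) boundedness: for all i, Yᵢ⁽⁰⁾ ∈ [l_y, L_y] and Fᵢ ∈ [l_f, L_f] almost surely with 0 < l_y and 0 < l_f; (iv) weak dependence among controls: (1/J²)·Σ_{i ≠ j, 2 ≤ i,j ≤ J+1} |Cov(Fᵢ, Fⱼ)| ≤ τ for a constant τ ≥ 0; (v) |Cov(F₁ / ((1/J)·Σ_{i=2}^{J+1} Fᵢ), (1/J)·Σ_{i=2}^{J+1} Yᵢ)| ≤ C for a constant C ≥ 0. Let Δ_f = L_f − l_f. Then |E[ψ̂ᵉᑫ²] − ψ₀| ≤ L_y · ( Δ_f²/(4·l_f²) · 1/√J + Δ_f/(2·l_f²)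 · √τ + (L_f/l_f³) · (Δ_f²/(4J) + τ) ) + C. -/

import Mathlib

open MeasureTheory ProbabilityTheory

/-- Covariance of two real random variables: `Cov(U, V) = E[UV] − E[U]·E[V]`. -/
noncomputable def covar {Ω : Type*} [MeasureSpace Ω] (U V : Ω → ℝ) : ℝ :=
  (∫ ω, U ω * V ω) - (∫ ω, U ω) * (∫ ω, V ω)

/-- Variance of a real random variable: `Var(U) = Cov(U, U)`. -/
noncomputable def var {Ω : Type*} [MeasureSpace Ω] (U : Ω → ℝ) : ℝ := covar U U

section Aux
set_option linter.unusedSectionVars false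
variable {Ω : Type*} [MeasureSpace Ω] [IsProbabilityMeasure (ℙ : Measure Ω)]

lemma integrable_of_bdd {f : Ω → ℝ} (hm : AEStronglyMeasurable f ℙ) {B : ℝ}
    (hb : ∀ᵐ ω ∂ℙ, |f ω| ≤ B) : Integrable f ℙ :=
  (integrable_const B).mono' hm (by simpa [Real.norm_eq_abs] using hb)

lemma covar_eq_shift {f g : Ω → ℝ} (c : ℝ) (hf : Integrable f ℙ) (hg : Integrable g ℙ)
    (hfg : Integrable (fun ω => f ω * g ω) ℙ) :
    covar f g = ∫ ω, (f ω - c) * (g ω - ∫ x, g x) := by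
  have h1 : (fun ω => (f ω - c) * (g ω - ∫ x, g x))
      = fun ω => (f ω * g ω - (∫ x, g x) * f ω) - (c * g ω - c * (∫ x, g x)) := by
    funext ω; ring
  have i1 : Integrable (fun ω => f ω * g ω - (∫ x, g x) * f ω) ℙ := hfg.sub (hf.const_mul _)
  have i2 : Integrable (fun ω => c * g ω - c * (∫ x, g x)) ℙ :=
    (hg.const_mul _).sub (integrable_const _)
  rw [h1, integral_sub i1 i2, integral_sub hfg (hf.const_mul _),
    integral_sub (hg.const_mul _) (integrable_const _),
    integral_const_mul, integral_const_mul, integral_const]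
  simp only [covar, probReal_univ, smul_eq_mul, one_mul]
  ring

lemma integral_sub_sq {f : Ω → ℝ} (c : ℝ) (hf : Integrable f ℙ)
    (hf2 : Integrable (fun ω => f ω ^ 2) ℙ) :
    ∫ ω, (f ω - c) ^ 2 = (∫ ω, f ω ^ 2) - 2 * c * (∫ ω, f ω) + c ^ 2 := by
  have h1 : (fun ω => (f ω - c) ^ 2)
      = fun ω => (f ω ^ 2 - 2 * c * f ω) + c ^ 2 := by
    funext ω; ring
  have i1 : Integrable (fun ω => f ω ^ 2 - 2 * c * f ω) ℙ := hf2.sub (hf.const_mul _)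
  rw [h1, integral_add i1 (integrable_const _),
    integral_sub hf2 (hf.const_mul _), integral_const_mul, integral_const]
  simp

lemma var_eq {f : Ω → ℝ} (hf : Integrable f ℙ)
    (hf2 : Integrable (fun ω => f ω ^ 2) ℙ) :
    var f = ∫ ω, (f ω - ∫ x, f x) ^ 2 := by
  rw [integral_sub_sq _ hf hf2]
  have h2 : (fun ω => f ω * f ω) = fun ω => f ω ^ 2 := by funext ω; ring
  simp only [var, covar, h2]
  ring

lemma var_nonneg' {f : Ω → ℝ} (hf : Integrable f ℙ)
    (hf2 : Integrable (fun ω => f ω ^ 2) ℙ) : 0 ≤ var f := by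
  rw [var_eq hf hf2]; exact integral_nonneg fun ω => sq_nonneg _

lemma integral_abs_le_sqrt {h : Ω → ℝ} (hi : Integrable h ℙ)
    (hi2 : Integrable (fun ω => h ω ^ 2) ℙ) :
    ∫ ω, |h ω| ≤ Real.sqrt (∫ ω, h ω ^ 2) := by
  set a := ∫ ω, |h ω| with ha'
  have ha : 0 ≤ a := integral_nonneg fun ω => abs_nonneg _
  have habs2 : (fun ω => |h ω| ^ 2) = fun ω => h ω ^ 2 := by
    funext ω; rw [sq_abs]
  have key : a ^ 2 ≤ ∫ ω, h ω ^ 2 := by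
    have h0 : 0 ≤ ∫ ω, (|h ω| - a) ^ 2 := integral_nonneg fun ω => sq_nonneg _
    have hexp := integral_sub_sq (f := fun ω => |h ω|) a hi.abs
      (by rw [habs2]; exact hi2)
    rw [habs2] at hexp
    rw [hexp] at h0
    nlinarith
  calc a = Real.sqrt (a ^ 2) := (Real.sqrt_sq ha).symm
    _ ≤ Real.sqrt (∫ ω, h ω ^ 2) := Real.sqrt_le_sqrt key

lemma var_le_of_bdd {f : Ω → ℝ} {l L : ℝ} (hf : Integrable f ℙ)
    (hf2 : Integrable (fun ω => f ω ^ 2) ℙ)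
    (hb : ∀ᵐ ω ∂ℙ, f ω ∈ Set.Icc l L) :
    var f ≤ (L - l) ^ 2 / 4 := by
  have h1 : var f ≤ ∫ ω, (f ω - (l + L) / 2) ^ 2 := by
    rw [var_eq hf hf2, integral_sub_sq ((l + L) / 2) hf hf2, integral_sub_sq _ hf hf2]
    nlinarith [sq_nonneg ((∫ x, f x) - (l + L) / 2)]
  have h2 : ∫ ω, (f ω - (l + L) / 2) ^ 2 ≤ (L - l) ^ 2 / 4 := by
    have hc : ∫ (_ : Ω), ((L - l) ^ 2 / 4 : ℝ) = (L - l) ^ 2 / 4 := by simp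
    rw [← hc]
    refine integral_mono_ae ?_ (integrable_const _) ?_
    · have h4 : (fun ω => (f ω - (l + L) / 2) ^ 2)
          = fun ω => (f ω ^ 2 - 2 * ((l + L) / 2) * f ω) + ((l + L) / 2) ^ 2 := by
        funext ω; ring
      rw [h4]
      exact (hf2.sub (hf.const_mul _)).add (integrable_const _)
    · filter_upwards [hb] with ω hω
      have h3 : |f ω - (l + L) / 2| ≤ (L - l) / 2 := by
        rw [abs_le]
        exact ⟨by linarith [hω.1, hω.2], by linarith [hω.1, hω.2]⟩
      calc (f ω - (l + L) / 2) ^ 2 = |f ω - (l + L) / 2| ^ 2 := (sq_abs _).symm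
        _ ≤ ((L - l) / 2) ^ 2 := pow_le_pow_left₀ (abs_nonneg _) h3 2
        _ = (L - l) ^ 2 / 4 := by ring
  linarith

lemma covar_sum_sum {ι : Type*} (s : Finset ι) (f : ι → Ω → ℝ)
    (hf : ∀ i ∈ s, Integrable (f i) ℙ)
    (hff : ∀ i ∈ s, ∀ j ∈ s, Integrable (fun ω => f i ω * f j ω) ℙ) :
    covar (fun ω => ∑ i ∈ s, f i ω) (fun ω => ∑ i ∈ s, f i ω)
      = ∑ i ∈ s, ∑ j ∈ s, covar (f i) (f j) := by
  unfold covar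
  have h1 : (fun ω => (∑ i ∈ s, f i ω) * (∑ j ∈ s, f j ω))
      = fun ω => ∑ i ∈ s, ∑ j ∈ s, f i ω * f j ω := by
    funext ω; rw [Finset.sum_mul_sum]
  have h2 : ∫ ω, (∑ i ∈ s, f i ω) * (∑ j ∈ s, f j ω)
      = ∑ i ∈ s, ∑ j ∈ s, ∫ ω, f i ω * f j ω := by
    rw [show (∫ ω, (∑ i ∈ s, f i ω) * (∑ j ∈ s, f j ω))
        = ∫ ω, ∑ i ∈ s, ∑ j ∈ s, f i ω * f j ω from by rw [h1]]
    rw [integral_finset_sum s fun i hi => integrable_finset_sum s fun j hj => hff i hi j hj]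
    exact Finset.sum_congr rfl fun i hi => integral_finset_sum s fun j hj => hff i hi j hj
  rw [h2, integral_finset_sum s hf, Finset.sum_mul_sum, ← Finset.sum_sub_distrib]
  exact Finset.sum_congr rfl fun i _ => by rw [← Finset.sum_sub_distrib]

set_option maxHeartbeats 2000000 in
lemma bias_bound_aux (J : ℕ) (hJ : 1 ≤ J) (f S T : Ω → ℝ)
    (hfm : Measurable f) (hSm : Measurable S) (hTm : Measurable T)
    (lf Lf Ly : ℝ) (hlf : 0 < lf)
    (hfb : ∀ᵐ ω ∂ℙ, f ω ∈ Set.Icc lf Lf)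
    (hSb : ∀ᵐ ω ∂ℙ, S ω ∈ Set.Icc ((J : ℝ) * lf) ((J : ℝ) * Lf))
    (hTb : ∀ᵐ ω ∂ℙ, T ω ∈ Set.Icc 0 ((J : ℝ) * Ly))
    (C : ℝ)
    (hcov : |covar (fun ω => f ω / S ω) T| ≤ C) :
    |(∫ ω, f ω / S ω * T ω) - ((∫ ω, f ω) / (∫ ω, S ω)) * (∫ ω, T ω)|
      ≤ (J : ℝ) * Ly * (((Lf - lf) / 2) * Real.sqrt (var S)
          + Lf / ((J : ℝ) * lf) * var S) / (∫ ω, S ω) ^ 2 + C := by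
  have hJ0 : (0 : ℝ) < J := by exact_mod_cast hJ
  have hJlf : 0 < (J : ℝ) * lf := by positivity
  obtain ⟨ω₀, hω₀⟩ := hfb.exists
  have hlfLf : lf ≤ Lf := le_trans hω₀.1 hω₀.2
  have hΔ : 0 ≤ Lf - lf := by linarith
  -- integrabilities
  have iS : Integrable S ℙ := integrable_of_bdd hSm.aestronglyMeasurable (B := (J : ℝ) * Lf)
    (by filter_upwards [hSb] with ω h; rw [abs_le]
        exact ⟨by nlinarith [h.1, h.2], h.2⟩)
  have iS2 : Integrable (fun ω => S ω ^ 2) ℙ :=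
    integrable_of_bdd (hSm.pow_const 2).aestronglyMeasurable (B := ((J : ℝ) * Lf) ^ 2)
    (by filter_upwards [hSb] with ω h
        rw [abs_le]
        constructor
        · nlinarith [sq_nonneg (S ω)]
        · nlinarith [h.1, h.2])
  have iff : Integrable f ℙ := integrable_of_bdd hfm.aestronglyMeasurable (B := Lf)
    (by filter_upwards [hfb] with ω h; rw [abs_le]; exact ⟨by linarith [h.1], h.2⟩)
  have iT : Integrable T ℙ := integrable_of_bdd hTm.aestronglyMeasurable (B := (J : ℝ) * Ly)
    (by filter_upwards [hTb] with ω h; rw [abs_le]; exact ⟨by linarith [h.1, h.2], h.2⟩)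
  have iQ : Integrable (fun ω => f ω / S ω) ℙ :=
    integrable_of_bdd (hfm.div hSm).aestronglyMeasurable (B := Lf / ((J : ℝ) * lf))
    (by filter_upwards [hfb, hSb] with ω h1 h2
        have hS0 : 0 < S ω := lt_of_lt_of_le hJlf h2.1
        rw [abs_le]
        constructor
        · have : 0 ≤ f ω / S ω := div_nonneg (by linarith [h1.1]) hS0.le
          have : 0 ≤ Lf / ((J : ℝ) * lf) := div_nonneg (by linarith) hJlf.le
          linarith [div_nonneg (le_trans hlf.le h1.1) hS0.le]
        · exact div_le_div₀ (by linarith [h1.2, hlf]) h1.2 hJlf h2.1)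
  have iQT : Integrable (fun ω => f ω / S ω * T ω) ℙ :=
    integrable_of_bdd ((hfm.div hSm).mul hTm).aestronglyMeasurable
      (B := Lf / ((J : ℝ) * lf) * ((J : ℝ) * Ly))
    (by filter_upwards [hfb, hSb, hTb] with ω h1 h2 h3
        have hS0 : 0 < S ω := lt_of_lt_of_le hJlf h2.1
        rw [abs_mul]
        have hq : |f ω / S ω| ≤ Lf / ((J : ℝ) * lf) := by
          rw [abs_of_nonneg (div_nonneg (le_trans hlf.le h1.1) hS0.le)]
          exact div_le_div₀ (by linarith [h1.2, hlf]) h1.2 hJlf h2.1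
        have ht : |T ω| ≤ (J : ℝ) * Ly := by
          rw [abs_of_nonneg h3.1]; exact h3.2
        exact mul_le_mul hq ht (abs_nonneg _) (div_nonneg (by linarith) hJlf.le))
  have ifS : Integrable (fun ω => f ω * S ω) ℙ :=
    integrable_of_bdd (hfm.mul hSm).aestronglyMeasurable (B := Lf * ((J : ℝ) * Lf))
    (by filter_upwards [hfb, hSb] with ω h1 h2
        rw [abs_mul]
        exact mul_le_mul (by rw [abs_of_nonneg (le_trans hlf.le h1.1)]; exact h1.2)
          (by rw [abs_of_nonneg (le_trans hJlf.le h2.1)]; exact h2.2)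
          (abs_nonneg _) (by linarith [hlf, hlfLf]))
  -- mean of S
  obtain ⟨m, hmdef⟩ : ∃ m : ℝ, m = ∫ ω, S ω := ⟨_, rfl⟩
  rw [← hmdef]
  have hm1 : (J : ℝ) * lf ≤ m := by
    rw [hmdef]
    have := integral_mono_ae (integrable_const ((J : ℝ) * lf)) iS
      (by filter_upwards [hSb] with ω h; exact h.1)
    simpa using this
  have hm2 : m ≤ (J : ℝ) * Lf := by
    rw [hmdef]
    have := integral_mono_ae iS (integrable_const ((J : ℝ) * Lf))
      (by filter_upwards [hSb] with ω h; exact h.2)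
    simpa using this
  have hm0 : 0 < m := lt_of_lt_of_le hJlf hm1
  -- more integrabilities
  have iSm : Integrable (fun ω => S ω - m) ℙ := iS.sub (integrable_const m)
  have iSm2 : Integrable (fun ω => (S ω - m) ^ 2) ℙ :=
    integrable_of_bdd (((hSm.sub measurable_const).pow_const 2)).aestronglyMeasurable
      (B := ((J : ℝ) * (Lf - lf)) ^ 2)
    (by filter_upwards [hSb] with ω h
        rw [abs_of_nonneg (sq_nonneg _)]
        have h1 : |S ω - m| ≤ (J : ℝ) * (Lf - lf) := by
          rw [abs_le]; constructor <;> nlinarith [h.1, h.2, hm1, hm2]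
        calc (S ω - m) ^ 2 = |S ω - m| ^ 2 := (sq_abs _).symm
          _ ≤ ((J : ℝ) * (Lf - lf)) ^ 2 := pow_le_pow_left₀ (abs_nonneg _) h1 2)
  have ifmS : Integrable (fun ω => f ω * (m - S ω)) ℙ := by
    have h1 : (fun ω => f ω * (m - S ω)) = fun ω => f ω * m - f ω * S ω := by
      funext ω; ring
    rw [h1]; exact (iff.mul_const m).sub ifS
  have ith : Integrable (fun ω => f ω * (m - S ω) ^ 2 / (S ω * m ^ 2)) ℙ :=
    integrable_of_bdd
      ((hfm.mul ((measurable_const.sub hSm).pow_const 2)).div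
        (hSm.mul_const _)).aestronglyMeasurable
      (B := Lf * ((J : ℝ) * (Lf - lf)) ^ 2 / ((J : ℝ) * lf * m ^ 2))
    (by filter_upwards [hfb, hSb] with ω h1 h2
        have hS0 : 0 < S ω := lt_of_lt_of_le hJlf h2.1
        have hnum : 0 ≤ f ω * (m - S ω) ^ 2 := mul_nonneg (le_trans hlf.le h1.1) (sq_nonneg _)
        rw [abs_of_nonneg (div_nonneg hnum (by positivity))]
        have hsq : (m - S ω) ^ 2 ≤ ((J : ℝ) * (Lf - lf)) ^ 2 := by
          have habs : |m - S ω| ≤ (J : ℝ) * (Lf - lf) := by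
            rw [abs_le]; constructor <;> nlinarith [h2.1, h2.2, hm1, hm2]
          calc (m - S ω) ^ 2 = |m - S ω| ^ 2 := (sq_abs _).symm
            _ ≤ _ := pow_le_pow_left₀ (abs_nonneg _) habs 2
        apply div_le_div₀ (mul_nonneg (by linarith : (0:ℝ) ≤ Lf) (sq_nonneg _)) _
          (mul_pos hJlf (by positivity)) _
        · exact mul_le_mul h1.2 hsq (sq_nonneg _) (by linarith)
        · exact mul_le_mul_of_nonneg_right h2.1 (by positivity))
  -- split via covariance
  have e_split : (∫ ω, f ω / S ω * T ω)
      = covar (fun ω => f ω / S ω) T + (∫ ω, f ω / S ω) * ∫ ω, T ω := by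
    simp only [covar]; ring
  -- pointwise expansion
  have e_ptwise : (fun ω => f ω / S ω)
      =ᵐ[ℙ] fun ω => f ω / m + f ω * (m - S ω) / m ^ 2 + f ω * (m - S ω) ^ 2 / (S ω * m ^ 2) := by
    filter_upwards [hSb] with ω h
    have hS0 : 0 < S ω := lt_of_lt_of_le hJlf h.1
    field_simp
    ring
  have e_int : (∫ ω, f ω / S ω) = (∫ ω, f ω) / m + (∫ ω, f ω * (m - S ω)) / m ^ 2
      + ∫ ω, f ω * (m - S ω) ^ 2 / (S ω * m ^ 2) := by
    rw [integral_congr_ae e_ptwise]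
    have i1 : Integrable (fun ω => f ω / m) ℙ := iff.div_const m
    have i2 : Integrable (fun ω => f ω * (m - S ω) / m ^ 2) ℙ := ifmS.div_const _
    have i12 : Integrable (fun ω => f ω / m + f ω * (m - S ω) / m ^ 2) ℙ := i1.add i2
    rw [integral_add i12 ith, integral_add i1 i2, integral_div, integral_div]
  have e_cov : (∫ ω, f ω * (m - S ω)) = -covar f S := by
    have h1 : (fun ω => f ω * (m - S ω)) = fun ω => f ω * m - f ω * S ω := by
      funext ω; ring
    rw [h1, integral_sub (iff.mul_const m) ifS, integral_mul_const]
    simp only [covar, ← hmdef]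
    ring
  -- G1 : covariance bound
  have hVnn : 0 ≤ var S := var_nonneg' iS iS2
  have hvar_eq : var S = ∫ ω, (S ω - m) ^ 2 := by
    rw [var_eq iS iS2, ← hmdef]
  have G1 : |covar f S| ≤ ((Lf - lf) / 2) * Real.sqrt (var S) := by
    rw [covar_eq_shift ((lf + Lf) / 2) iff iS ifS, ← hmdef]
    have iprod : Integrable (fun ω => (f ω - (lf + Lf) / 2) * (S ω - m)) ℙ := by
      have h1 : (fun ω => (f ω - (lf + Lf) / 2) * (S ω - m))
          = fun ω => (f ω * S ω - m * f ω) - ((lf + Lf) / 2 * S ω - (lf + Lf) / 2 * m) := by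
        funext ω; ring
      rw [h1]
      exact (ifS.sub (iff.const_mul m)).sub ((iS.const_mul _).sub (integrable_const _))
    have iprodabs : Integrable (fun ω => |f ω - (lf + Lf) / 2| * |S ω - m|) ℙ := by
      have := iprod.abs
      simpa only [abs_mul] using this
    have step1 : |∫ ω, (f ω - (lf + Lf) / 2) * (S ω - m)|
        ≤ ∫ ω, |f ω - (lf + Lf) / 2| * |S ω - m| := by
      simpa [Real.norm_eq_abs, abs_mul] using
        norm_integral_le_integral_norm (μ := ℙ) (fun ω => (f ω - (lf + Lf) / 2) * (S ω - m))
    have step2 : (∫ ω, |f ω - (lf + Lf) / 2| * |S ω - m|)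
        ≤ ∫ ω, ((Lf - lf) / 2) * |S ω - m| := by
      refine integral_mono_ae iprodabs ((iSm.abs).const_mul _) ?_
      filter_upwards [hfb] with ω h1
      refine mul_le_mul_of_nonneg_right ?_ (abs_nonneg _)
      rw [abs_le]; exact ⟨by linarith [h1.1, h1.2], by linarith [h1.1, h1.2]⟩
    have step3 : (∫ ω, ((Lf - lf) / 2) * |S ω - m|) = ((Lf - lf) / 2) * ∫ ω, |S ω - m| :=
      integral_const_mul _ _
    have step4 : (∫ ω, |S ω - m|) ≤ Real.sqrt (var S) := by
      rw [hvar_eq]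
      exact integral_abs_le_sqrt iSm iSm2
    calc |∫ ω, (f ω - (lf + Lf) / 2) * (S ω - m)| ≤ ∫ ω, |f ω - (lf + Lf) / 2| * |S ω - m| := step1
      _ ≤ ∫ ω, ((Lf - lf) / 2) * |S ω - m| := step2
      _ = ((Lf - lf) / 2) * ∫ ω, |S ω - m| := step3
      _ ≤ ((Lf - lf) / 2) * Real.sqrt (var S) := by
          refine mul_le_mul_of_nonneg_left step4 (by linarith)
  -- G4 : third-order term bound
  have G4 : |∫ ω, f ω * (m - S ω) ^ 2 / (S ω * m ^ 2)|
      ≤ Lf / ((J : ℝ) * lf) * var S / m ^ 2 := by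
    have step1 : |∫ ω, f ω * (m - S ω) ^ 2 / (S ω * m ^ 2)|
        ≤ ∫ ω, |f ω * (m - S ω) ^ 2 / (S ω * m ^ 2)| := by
      simpa [Real.norm_eq_abs] using
        norm_integral_le_integral_norm (μ := ℙ) (fun ω => f ω * (m - S ω) ^ 2 / (S ω * m ^ 2))
    have step2 : (∫ ω, |f ω * (m - S ω) ^ 2 / (S ω * m ^ 2)|)
        ≤ ∫ ω, (Lf / ((J : ℝ) * lf * m ^ 2)) * (S ω - m) ^ 2 := by
      refine integral_mono_ae ith.abs (iSm2.const_mul _) ?_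
      filter_upwards [hfb, hSb] with ω h1 h2
      have hS0 : 0 < S ω := lt_of_lt_of_le hJlf h2.1
      have hnum : 0 ≤ f ω * (m - S ω) ^ 2 := mul_nonneg (le_trans hlf.le h1.1) (sq_nonneg _)
      rw [abs_of_nonneg (div_nonneg hnum (by positivity))]
      have key : f ω * (m - S ω) ^ 2 / (S ω * m ^ 2)
          ≤ Lf * (m - S ω) ^ 2 / ((J : ℝ) * lf * m ^ 2) := by
        apply div_le_div₀ (mul_nonneg (by linarith : (0:ℝ) ≤ Lf) (sq_nonneg _))
          (mul_le_mul h1.2 le_rfl (sq_nonneg _) (by linarith)) (mul_pos hJlf (by positivity))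
          (mul_le_mul_of_nonneg_right h2.1 (by positivity))
      calc f ω * (m - S ω) ^ 2 / (S ω * m ^ 2)
          ≤ Lf * (m - S ω) ^ 2 / ((J : ℝ) * lf * m ^ 2) := key
        _ = (Lf / ((J : ℝ) * lf * m ^ 2)) * (S ω - m) ^ 2 := by ring
    have step3 : (∫ ω, (Lf / ((J : ℝ) * lf * m ^ 2)) * (S ω - m) ^ 2)
        = (Lf / ((J : ℝ) * lf * m ^ 2)) * var S := by
      rw [integral_const_mul, ← hvar_eq]
    have step5 : Lf / ((J : ℝ) * lf * m ^ 2) * var S = Lf / ((J : ℝ) * lf) * var S / m ^ 2 := by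
      ring
    calc |∫ ω, f ω * (m - S ω) ^ 2 / (S ω * m ^ 2)|
        ≤ ∫ ω, |f ω * (m - S ω) ^ 2 / (S ω * m ^ 2)| := step1
      _ ≤ ∫ ω, (Lf / ((J : ℝ) * lf * m ^ 2)) * (S ω - m) ^ 2 := step2
      _ = (Lf / ((J : ℝ) * lf * m ^ 2)) * var S := step3
      _ = Lf / ((J : ℝ) * lf) * var S / m ^ 2 := step5
  -- bounds on ∫ T
  have hT1 : 0 ≤ ∫ ω, T ω :=
    integral_nonneg_of_ae (by filter_upwards [hTb] with ω h; exact h.1)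
  have hT2 : (∫ ω, T ω) ≤ (J : ℝ) * Ly := by
    have := integral_mono_ae iT (integrable_const ((J : ℝ) * Ly))
      (by filter_upwards [hTb] with ω h; exact h.2)
    simpa using this
  have hJLy : 0 ≤ (J : ℝ) * Ly := le_trans hT1 hT2
  -- remainder bound
  have hR : (∫ ω, f ω) / m - (∫ ω, f ω / S ω)
      = covar f S / m ^ 2 - ∫ ω, f ω * (m - S ω) ^ 2 / (S ω * m ^ 2) := by
    rw [e_int, e_cov]; ring
  have hP : 0 ≤ (Lf - lf) / 2 * Real.sqrt (var S) + Lf / ((J : ℝ) * lf) * var S :=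
    add_nonneg (mul_nonneg (by linarith) (Real.sqrt_nonneg _))
      (mul_nonneg (div_nonneg (by linarith) hJlf.le) hVnn)
  have hRb : |(∫ ω, f ω) / m - ∫ ω, f ω / S ω|
      ≤ ((Lf - lf) / 2 * Real.sqrt (var S) + Lf / ((J : ℝ) * lf) * var S) / m ^ 2 := by
    rw [hR, add_div]
    have h1 : |covar f S / m ^ 2 - ∫ ω, f ω * (m - S ω) ^ 2 / (S ω * m ^ 2)|
        ≤ |covar f S| / m ^ 2 + |∫ ω, f ω * (m - S ω) ^ 2 / (S ω * m ^ 2)| := by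
      calc |covar f S / m ^ 2 - ∫ ω, f ω * (m - S ω) ^ 2 / (S ω * m ^ 2)|
          ≤ |covar f S / m ^ 2| + |∫ ω, f ω * (m - S ω) ^ 2 / (S ω * m ^ 2)| := abs_sub _ _
        _ = |covar f S| / m ^ 2 + |∫ ω, f ω * (m - S ω) ^ 2 / (S ω * m ^ 2)| := by
            rw [abs_div, abs_of_nonneg (sq_nonneg m)]
    refine h1.trans (add_le_add ?_ ?_)
    · have hm2pos : (0:ℝ) < m ^ 2 := by positivity
      gcongr
    · exact G4
  have hbias : (∫ ω, f ω / S ω * T ω) - ((∫ ω, f ω) / m) * (∫ ω, T ω)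
      = covar (fun ω => f ω / S ω) T
        - ((∫ ω, f ω) / m - ∫ ω, f ω / S ω) * (∫ ω, T ω) := by
    rw [e_split]; ring
  have habsT : |∫ ω, T ω| ≤ (J : ℝ) * Ly := by rw [abs_of_nonneg hT1]; exact hT2
  calc |(∫ ω, f ω / S ω * T ω) - ((∫ ω, f ω) / m) * (∫ ω, T ω)|
      = |covar (fun ω => f ω / S ω) T
          - ((∫ ω, f ω) / m - ∫ ω, f ω / S ω) * (∫ ω, T ω)| := by rw [hbias]
    _ ≤ |covar (fun ω => f ω / S ω) T|
        + |((∫ ω, f ω) / m - ∫ ω, f ω / S ω) * (∫ ω, T ω)| := abs_sub _ _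
    _ ≤ C + (((Lf - lf) / 2 * Real.sqrt (var S) + Lf / ((J : ℝ) * lf) * var S) / m ^ 2)
          * ((J : ℝ) * Ly) := by
        refine add_le_add hcov ?_
        rw [abs_mul]
        exact mul_le_mul hRb habsT (abs_nonneg _) (div_nonneg hP (sq_nonneg m))
    _ = (J : ℝ) * Ly * ((Lf - lf) / 2 * Real.sqrt (var S) + Lf / ((J : ℝ) * lf) * var S)
          / m ^ 2 + C := by ring
end Aux

set_option maxHeartbeats 4000000

/-- **Theorem 3.3 (bias bound for the logarithmic equi-confounding estimator).**
Under consistency, logarithmic equi-confounding, boundedness, weak dependence among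
controls, and the covariance condition, the absolute bias of
`ψ̂ᵉᑫ² = Y₁ − (F₁/Σ_{i=2}^{J+1} Fᵢ)·Σ_{i=2}^{J+1} Yᵢ` for `ψ₀ = E[Y₁] − E[Y₁⁽⁰⁾]`
is bounded by
`L_y·(Δ_f²/(4l_f²)·1/√J + Δ_f/(2l_f²)·√τ + (L_f/l_f³)·(Δ_f²/(4J) + τ)) + C`. -/
theorem log_equiconfounding_bias_bound
    {Ω : Type*} [MeasureSpace Ω] [IsProbabilityMeasure (ℙ : Measure Ω)]
    (J : ℕ) (hJ : 1 ≤ J)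
    (Y Y0 F : ℕ → Ω → ℝ)
    (hYint : ∀ i ∈ Finset.Icc 1 (J + 1), Integrable (Y i) ℙ)
    (hY0int : ∀ i ∈ Finset.Icc 1 (J + 1), Integrable (Y0 i) ℙ)
    (hFint : ∀ i ∈ Finset.Icc 1 (J + 1), Integrable (F i) ℙ)
    (hYmeas : ∀ i ∈ Finset.Icc 1 (J + 1), Measurable (Y i))
    (hFmeas : ∀ i ∈ Finset.Icc 1 (J + 1), Measurable (F i))
    -- (i) consistency
    (hcons : ∀ i ∈ Finset.Icc 2 (J + 1), Y i =ᵐ[ℙ] Y0 i)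
    -- (ii) logarithmic equi-confounding
    (hlogequi :
      (∫ ω, Y0 1 ω) / (∫ ω, ∑ i ∈ Finset.Icc 2 (J + 1), Y0 i ω)
        = (∫ ω, F 1 ω) / (∫ ω, ∑ i ∈ Finset.Icc 2 (J + 1), F i ω))
    -- (iii) boundedness
    (ly Ly lf Lf : ℝ) (hly : 0 < ly) (hlf : 0 < lf)
    (hY0bdd : ∀ i ∈ Finset.Icc 1 (J + 1), ∀ᵐ ω ∂ℙ, Y0 i ω ∈ Set.Icc ly Ly)
    (hFbdd : ∀ i ∈ Finset.Icc 1 (J + 1), ∀ᵐ ω ∂ℙ, F i ω ∈ Set.Icc lf Lf)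
    -- (iv) weak dependence among controls
    (τ : ℝ) (hτ : 0 ≤ τ)
    (hweak : (1 / (J : ℝ) ^ 2) *
        ∑ i ∈ Finset.Icc 2 (J + 1), ∑ j ∈ (Finset.Icc 2 (J + 1)).erase i,
          |covar (F i) (F j)| ≤ τ)
    -- (v) covariance condition on the ratio
    (C : ℝ) (hC : 0 ≤ C)
    (hcov : |covar (fun ω => F 1 ω / ((1 / (J : ℝ)) * ∑ i ∈ Finset.Icc 2 (J + 1), F i ω))
        (fun ω => (1 / (J : ℝ)) * ∑ i ∈ Finset.Icc 2 (J + 1), Y i ω)| ≤ C) :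
    |(∫ ω, (Y 1 ω - F 1 ω / (∑ i ∈ Finset.Icc 2 (J + 1), F i ω)
          * ∑ i ∈ Finset.Icc 2 (J + 1), Y i ω))
        - ((∫ ω, Y 1 ω) - ∫ ω, Y0 1 ω)|
      ≤ Ly * ((Lf - lf) ^ 2 / (4 * lf ^ 2) * (1 / Real.sqrt J)
          + (Lf - lf) / (2 * lf ^ 2) * Real.sqrt τ
          + Lf / lf ^ 3 * ((Lf - lf) ^ 2 / (4 * J) + τ)) + C := by
  have hJ0 : (0 : ℝ) < J := by exact_mod_cast hJ
  have hJne : (J : ℝ) ≠ 0 := ne_of_gt hJ0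
  have hIsub : Finset.Icc 2 (J + 1) ⊆ Finset.Icc 1 (J + 1) :=
    Finset.Icc_subset_Icc (by norm_num) le_rfl
  have h1mem : (1 : ℕ) ∈ Finset.Icc 1 (J + 1) := by
    simp only [Finset.mem_Icc]; omega
  have hcard : (Finset.Icc 2 (J + 1)).card = J := by
    rw [Nat.card_Icc]; omega
  obtain ⟨ω₀, hω₀⟩ := (hFbdd 1 h1mem).exists
  have hlfLf : lf ≤ Lf := le_trans hω₀.1 hω₀.2
  obtain ⟨ω₁, hω₁⟩ := (hY0bdd 1 h1mem).exists
  have hlyLy : ly ≤ Ly := le_trans hω₁.1 hω₁.2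
  have hLy : 0 < Ly := lt_of_lt_of_le hly hlyLy
  -- measurability
  have hSm : Measurable (fun ω => ∑ i ∈ Finset.Icc 2 (J + 1), F i ω) :=
    Finset.measurable_sum _ fun i hi => hFmeas i (hIsub hi)
  have hTm : Measurable (fun ω => ∑ i ∈ Finset.Icc 2 (J + 1), Y i ω) :=
    Finset.measurable_sum _ fun i hi => hYmeas i (hIsub hi)
  have hF1m : Measurable (F 1) := hFmeas 1 h1mem
  -- a.e. bounds on sums
  have hSb : ∀ᵐ ω ∂ℙ, (fun ω => ∑ i ∈ Finset.Icc 2 (J + 1), F i ω) ω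
      ∈ Set.Icc ((J : ℝ) * lf) ((J : ℝ) * Lf) := by
    have hall : ∀ᵐ ω ∂ℙ, ∀ i ∈ Finset.Icc 2 (J + 1), F i ω ∈ Set.Icc lf Lf :=
      (Filter.eventually_all_finset _).mpr fun i hi => hFbdd i (hIsub hi)
    filter_upwards [hall] with ω h
    constructor
    · calc (J : ℝ) * lf = ∑ _i ∈ Finset.Icc 2 (J + 1), lf := by
            rw [Finset.sum_const, hcard, nsmul_eq_mul]
        _ ≤ ∑ i ∈ Finset.Icc 2 (J + 1), F i ω :=
            Finset.sum_le_sum fun i hi => (h i hi).1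
    · calc (∑ i ∈ Finset.Icc 2 (J + 1), F i ω)
          ≤ ∑ _i ∈ Finset.Icc 2 (J + 1), Lf := Finset.sum_le_sum fun i hi => (h i hi).2
        _ = (J : ℝ) * Lf := by rw [Finset.sum_const, hcard, nsmul_eq_mul]
  have hTball : ∀ᵐ ω ∂ℙ, (J : ℝ) * ly ≤ (∑ i ∈ Finset.Icc 2 (J + 1), Y i ω)
      ∧ (∑ i ∈ Finset.Icc 2 (J + 1), Y i ω) ≤ (J : ℝ) * Ly := by
    have hally : ∀ᵐ ω ∂ℙ, ∀ i ∈ Finset.Icc 2 (J + 1), Y0 i ω ∈ Set.Icc ly Ly :=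
      (Filter.eventually_all_finset _).mpr fun i hi => hY0bdd i (hIsub hi)
    have hallc : ∀ᵐ ω ∂ℙ, ∀ i ∈ Finset.Icc 2 (J + 1), Y i ω = Y0 i ω :=
      (Filter.eventually_all_finset _).mpr fun i hi => hcons i hi
    filter_upwards [hally, hallc] with ω h hc
    have hsum : (∑ i ∈ Finset.Icc 2 (J + 1), Y i ω)
        = ∑ i ∈ Finset.Icc 2 (J + 1), Y0 i ω := Finset.sum_congr rfl hc
    rw [hsum]
    constructor
    · calc (J : ℝ) * ly = ∑ _i ∈ Finset.Icc 2 (J + 1), ly := by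
            rw [Finset.sum_const, hcard, nsmul_eq_mul]
        _ ≤ _ := Finset.sum_le_sum fun i hi => (h i hi).1
    · calc (∑ i ∈ Finset.Icc 2 (J + 1), Y0 i ω)
          ≤ ∑ _i ∈ Finset.Icc 2 (J + 1), Ly := Finset.sum_le_sum fun i hi => (h i hi).2
        _ = (J : ℝ) * Ly := by rw [Finset.sum_const, hcard, nsmul_eq_mul]
  have hTb : ∀ᵐ ω ∂ℙ, (fun ω => ∑ i ∈ Finset.Icc 2 (J + 1), Y i ω) ω
      ∈ Set.Icc (0 : ℝ) ((J : ℝ) * Ly) := by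
    filter_upwards [hTball] with ω h
    exact ⟨le_trans (by positivity) h.1, h.2⟩
  -- integrability
  have iT : Integrable (fun ω => ∑ i ∈ Finset.Icc 2 (J + 1), Y i ω) ℙ :=
    integrable_finset_sum _ fun i hi => hYint i (hIsub hi)
  have iS : Integrable (fun ω => ∑ i ∈ Finset.Icc 2 (J + 1), F i ω) ℙ :=
    integrable_finset_sum _ fun i hi => hFint i (hIsub hi)
  have hJlf : 0 < (J : ℝ) * lf := by positivity
  have iQT : Integrable (fun ω => F 1 ω / (∑ i ∈ Finset.Icc 2 (J + 1), F i ω)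
      * ∑ i ∈ Finset.Icc 2 (J + 1), Y i ω) ℙ := by
    refine integrable_of_bdd ((hF1m.div hSm).mul hTm).aestronglyMeasurable
      (B := Lf / ((J : ℝ) * lf) * ((J : ℝ) * Ly)) ?_
    filter_upwards [hFbdd 1 h1mem, hSb, hTb] with ω h1 h2 h3
    have hS0 : 0 < ∑ i ∈ Finset.Icc 2 (J + 1), F i ω := lt_of_lt_of_le hJlf h2.1
    rw [abs_mul]
    have hq : |F 1 ω / ∑ i ∈ Finset.Icc 2 (J + 1), F i ω| ≤ Lf / ((J : ℝ) * lf) := by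
      rw [abs_of_nonneg (div_nonneg (le_trans hlf.le h1.1) hS0.le)]
      exact div_le_div₀ (by linarith [h1.2]) h1.2 hJlf h2.1
    have ht : |∑ i ∈ Finset.Icc 2 (J + 1), Y i ω| ≤ (J : ℝ) * Ly := by
      rw [abs_of_nonneg h3.1]; exact h3.2
    exact mul_le_mul hq ht (abs_nonneg _) (div_nonneg (by linarith) hJlf.le)
  -- equal sums of Y and Y0
  have hTT0 : (∫ ω, ∑ i ∈ Finset.Icc 2 (J + 1), Y i ω)
      = ∫ ω, ∑ i ∈ Finset.Icc 2 (J + 1), Y0 i ω := by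
    refine integral_congr_ae ?_
    have hallc : ∀ᵐ ω ∂ℙ, ∀ i ∈ Finset.Icc 2 (J + 1), Y i ω = Y0 i ω :=
      (Filter.eventually_all_finset _).mpr fun i hi => hcons i hi
    filter_upwards [hallc] with ω hc
    exact Finset.sum_congr rfl hc
  -- positivity of denominators
  have hTpos : 0 < ∫ ω, ∑ i ∈ Finset.Icc 2 (J + 1), Y i ω := by
    have h1 : (J : ℝ) * ly ≤ ∫ ω, ∑ i ∈ Finset.Icc 2 (J + 1), Y i ω := by
      have := integral_mono_ae (integrable_const ((J : ℝ) * ly)) iT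
        (by filter_upwards [hTball] with ω h; exact h.1)
      simpa using this
    have : 0 < (J : ℝ) * ly := by positivity
    linarith
  have hSpos : 0 < ∫ ω, ∑ i ∈ Finset.Icc 2 (J + 1), F i ω := by
    have h1 : (J : ℝ) * lf ≤ ∫ ω, ∑ i ∈ Finset.Icc 2 (J + 1), F i ω := by
      have := integral_mono_ae (integrable_const ((J : ℝ) * lf)) iS
        (by filter_upwards [hSb] with ω h; exact h.1)
      simpa using this
    linarith
  -- equi-confounding rearranged
  have hY01eq : (∫ ω, Y0 1 ω)
      = ((∫ ω, F 1 ω) / (∫ ω, ∑ i ∈ Finset.Icc 2 (J + 1), F i ω))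
        * ∫ ω, ∑ i ∈ Finset.Icc 2 (J + 1), Y i ω := by
    rw [hTT0]
    have hT0ne : (∫ ω, ∑ i ∈ Finset.Icc 2 (J + 1), Y0 i ω) ≠ 0 := by
      rw [← hTT0]; exact ne_of_gt hTpos
    rw [div_eq_div_iff hT0ne (ne_of_gt hSpos)] at hlogequi
    field_simp
    linear_combination hlogequi
  -- covariance hypothesis rescaled
  have hcov' : |covar (fun ω => F 1 ω / (∑ i ∈ Finset.Icc 2 (J + 1), F i ω))
      (fun ω => ∑ i ∈ Finset.Icc 2 (J + 1), Y i ω)| ≤ C := by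
    have e1 : (fun ω => F 1 ω / ((1 / (J : ℝ)) * ∑ i ∈ Finset.Icc 2 (J + 1), F i ω))
        = fun ω => (J : ℝ) * (F 1 ω / (∑ i ∈ Finset.Icc 2 (J + 1), F i ω)) := by
      funext ω
      rw [div_mul_eq_div_div_swap, one_div]
      simp [div_eq_mul_inv]
      ring
    have ecov : covar (fun ω => F 1 ω / ((1 / (J : ℝ)) * ∑ i ∈ Finset.Icc 2 (J + 1), F i ω))
        (fun ω => (1 / (J : ℝ)) * ∑ i ∈ Finset.Icc 2 (J + 1), Y i ω)
        = covar (fun ω => F 1 ω / (∑ i ∈ Finset.Icc 2 (J + 1), F i ω))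
          (fun ω => ∑ i ∈ Finset.Icc 2 (J + 1), Y i ω) := by
      rw [e1]
      simp only [covar]
      rw [show (fun ω => (J : ℝ) * (F 1 ω / (∑ i ∈ Finset.Icc 2 (J + 1), F i ω))
            * ((1 / (J : ℝ)) * ∑ i ∈ Finset.Icc 2 (J + 1), Y i ω))
          = fun ω => F 1 ω / (∑ i ∈ Finset.Icc 2 (J + 1), F i ω)
            * ∑ i ∈ Finset.Icc 2 (J + 1), Y i ω from ?_]
      · rw [integral_const_mul, integral_const_mul]
        field_simp
      · funext ω
        rw [show (J : ℝ) * (F 1 ω / (∑ i ∈ Finset.Icc 2 (J + 1), F i ω))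
              * ((1 / (J : ℝ)) * ∑ i ∈ Finset.Icc 2 (J + 1), Y i ω)
            = (F 1 ω / (∑ i ∈ Finset.Icc 2 (J + 1), F i ω)
              * ∑ i ∈ Finset.Icc 2 (J + 1), Y i ω) * ((J : ℝ) * (1 / (J : ℝ))) from by ring,
          mul_one_div_cancel hJne, mul_one]
    rw [← ecov]
    exact hcov
  -- integrability of squares and products of the F i
  have iS2 : Integrable (fun ω => (∑ i ∈ Finset.Icc 2 (J + 1), F i ω) ^ 2) ℙ := by
    refine integrable_of_bdd ((hSm.pow_const 2)).aestronglyMeasurable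
      (B := ((J : ℝ) * Lf) ^ 2) ?_
    filter_upwards [hSb] with ω h
    rw [abs_of_nonneg (sq_nonneg _)]
    calc (∑ i ∈ Finset.Icc 2 (J + 1), F i ω) ^ 2
        = |∑ i ∈ Finset.Icc 2 (J + 1), F i ω| ^ 2 := (sq_abs _).symm
      _ ≤ ((J : ℝ) * Lf) ^ 2 := by
          refine pow_le_pow_left₀ (abs_nonneg _) ?_ 2
          rw [abs_of_nonneg (le_trans hJlf.le h.1)]; exact h.2
  have iF2 : ∀ i ∈ Finset.Icc 1 (J + 1), Integrable (fun ω => F i ω ^ 2) ℙ := by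
    intro i hi
    refine integrable_of_bdd (((hFmeas i hi).pow_const 2)).aestronglyMeasurable
      (B := Lf ^ 2) ?_
    filter_upwards [hFbdd i hi] with ω h
    rw [abs_of_nonneg (sq_nonneg _)]
    calc F i ω ^ 2 = |F i ω| ^ 2 := (sq_abs _).symm
      _ ≤ Lf ^ 2 := by
          refine pow_le_pow_left₀ (abs_nonneg _) ?_ 2
          rw [abs_of_nonneg (le_trans hlf.le h.1)]; exact h.2
  have iFF : ∀ i ∈ Finset.Icc 2 (J + 1), ∀ j ∈ Finset.Icc 2 (J + 1),
      Integrable (fun ω => F i ω * F j ω) ℙ := by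
    intro i hi j hj
    refine integrable_of_bdd
      ((hFmeas i (hIsub hi)).mul (hFmeas j (hIsub hj))).aestronglyMeasurable
      (B := Lf * Lf) ?_
    filter_upwards [hFbdd i (hIsub hi), hFbdd j (hIsub hj)] with ω h1 h2
    rw [abs_mul]
    exact mul_le_mul (by rw [abs_of_nonneg (le_trans hlf.le h1.1)]; exact h1.2)
      (by rw [abs_of_nonneg (le_trans hlf.le h2.1)]; exact h2.2)
      (abs_nonneg _) (by linarith)
  -- variance bound
  have hvar0 : 0 ≤ var (fun ω => ∑ i ∈ Finset.Icc 2 (J + 1), F i ω) := var_nonneg' iS iS2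
  have hvarle : var (fun ω => ∑ i ∈ Finset.Icc 2 (J + 1), F i ω)
      ≤ (J : ℝ) * (Lf - lf) ^ 2 / 4 + (J : ℝ) ^ 2 * τ := by
    have hvarsum : var (fun ω => ∑ i ∈ Finset.Icc 2 (J + 1), F i ω)
        = ∑ i ∈ Finset.Icc 2 (J + 1), ∑ j ∈ Finset.Icc 2 (J + 1), covar (F i) (F j) := by
      unfold var
      exact covar_sum_sum _ _ (fun i hi => hFint i (hIsub hi)) iFF
    rw [hvarsum]
    have hsplit : ∑ i ∈ Finset.Icc 2 (J + 1), ∑ j ∈ Finset.Icc 2 (J + 1), covar (F i) (F j)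
        = ∑ i ∈ Finset.Icc 2 (J + 1), (covar (F i) (F i)
            + ∑ j ∈ (Finset.Icc 2 (J + 1)).erase i, covar (F i) (F j)) :=
      Finset.sum_congr rfl fun i hi => (Finset.add_sum_erase _ _ hi).symm
    rw [hsplit, Finset.sum_add_distrib]
    have hd : ∑ i ∈ Finset.Icc 2 (J + 1), covar (F i) (F i) ≤ (J : ℝ) * (Lf - lf) ^ 2 / 4 := by
      calc ∑ i ∈ Finset.Icc 2 (J + 1), covar (F i) (F i)
          ≤ ∑ _i ∈ Finset.Icc 2 (J + 1), (Lf - lf) ^ 2 / 4 :=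
            Finset.sum_le_sum fun i hi =>
              var_le_of_bdd (hFint i (hIsub hi)) (iF2 i (hIsub hi)) (hFbdd i (hIsub hi))
        _ = (J : ℝ) * ((Lf - lf) ^ 2 / 4) := by rw [Finset.sum_const, hcard, nsmul_eq_mul]
        _ = (J : ℝ) * (Lf - lf) ^ 2 / 4 := by ring
    have hoff : ∑ i ∈ Finset.Icc 2 (J + 1), ∑ j ∈ (Finset.Icc 2 (J + 1)).erase i,
        covar (F i) (F j) ≤ (J : ℝ) ^ 2 * τ := by
      have h1 : ∑ i ∈ Finset.Icc 2 (J + 1), ∑ j ∈ (Finset.Icc 2 (J + 1)).erase i,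
          covar (F i) (F j)
          ≤ ∑ i ∈ Finset.Icc 2 (J + 1), ∑ j ∈ (Finset.Icc 2 (J + 1)).erase i,
            |covar (F i) (F j)| :=
        Finset.sum_le_sum fun i _ => Finset.sum_le_sum fun j _ => le_abs_self _
      have hid : (J : ℝ) ^ 2 * (1 / (J : ℝ) ^ 2
          * ∑ i ∈ Finset.Icc 2 (J + 1), ∑ j ∈ (Finset.Icc 2 (J + 1)).erase i,
            |covar (F i) (F j)|)
          = ∑ i ∈ Finset.Icc 2 (J + 1), ∑ j ∈ (Finset.Icc 2 (J + 1)).erase i,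
            |covar (F i) (F j)| := by
        field_simp
      have h2 := mul_le_mul_of_nonneg_left hweak (le_of_lt (by positivity : (0:ℝ) < (J : ℝ) ^ 2))
      rw [hid] at h2
      linarith
    linarith
  -- sqrt bound
  have hΔ : 0 ≤ Lf - lf := by linarith
  have hsqrtV : Real.sqrt (var (fun ω => ∑ i ∈ Finset.Icc 2 (J + 1), F i ω))
      ≤ (Lf - lf) / 2 * Real.sqrt J + (J : ℝ) * Real.sqrt τ := by
    have ha : (0:ℝ) ≤ (J : ℝ) * (Lf - lf) ^ 2 / 4 := by positivity
    have hb : (0:ℝ) ≤ (J : ℝ) ^ 2 * τ := by positivity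
    have h1 : Real.sqrt ((J : ℝ) * (Lf - lf) ^ 2 / 4 + (J : ℝ) ^ 2 * τ)
        ≤ Real.sqrt ((J : ℝ) * (Lf - lf) ^ 2 / 4) + Real.sqrt ((J : ℝ) ^ 2 * τ) := by
      have h2 : (J : ℝ) * (Lf - lf) ^ 2 / 4 + (J : ℝ) ^ 2 * τ
          ≤ (Real.sqrt ((J : ℝ) * (Lf - lf) ^ 2 / 4) + Real.sqrt ((J : ℝ) ^ 2 * τ)) ^ 2 := by
        nlinarith [Real.sq_sqrt ha, Real.sq_sqrt hb, Real.sqrt_nonneg ((J : ℝ) * (Lf - lf) ^ 2 / 4),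
          Real.sqrt_nonneg ((J : ℝ) ^ 2 * τ)]
      calc Real.sqrt ((J : ℝ) * (Lf - lf) ^ 2 / 4 + (J : ℝ) ^ 2 * τ)
          ≤ Real.sqrt ((Real.sqrt ((J : ℝ) * (Lf - lf) ^ 2 / 4)
              + Real.sqrt ((J : ℝ) ^ 2 * τ)) ^ 2) := Real.sqrt_le_sqrt h2
        _ = _ := Real.sqrt_sq (add_nonneg (Real.sqrt_nonneg _) (Real.sqrt_nonneg _))
    have e1 : Real.sqrt ((J : ℝ) * (Lf - lf) ^ 2 / 4) = (Lf - lf) / 2 * Real.sqrt J := by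
      rw [show (J : ℝ) * (Lf - lf) ^ 2 / 4 = ((Lf - lf) / 2) ^ 2 * (J : ℝ) from by ring,
        Real.sqrt_mul (sq_nonneg _), Real.sqrt_sq (by linarith)]
    have e2 : Real.sqrt ((J : ℝ) ^ 2 * τ) = (J : ℝ) * Real.sqrt τ := by
      rw [Real.sqrt_mul (sq_nonneg _), Real.sqrt_sq hJ0.le]
    calc Real.sqrt (var (fun ω => ∑ i ∈ Finset.Icc 2 (J + 1), F i ω))
        ≤ Real.sqrt ((J : ℝ) * (Lf - lf) ^ 2 / 4 + (J : ℝ) ^ 2 * τ) := Real.sqrt_le_sqrt hvarle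
      _ ≤ Real.sqrt ((J : ℝ) * (Lf - lf) ^ 2 / 4) + Real.sqrt ((J : ℝ) ^ 2 * τ) := h1
      _ = (Lf - lf) / 2 * Real.sqrt J + (J : ℝ) * Real.sqrt τ := by rw [e1, e2]
  -- apply the key estimate
  have key := bias_bound_aux J hJ (F 1) (fun ω => ∑ i ∈ Finset.Icc 2 (J + 1), F i ω)
    (fun ω => ∑ i ∈ Finset.Icc 2 (J + 1), Y i ω) hF1m hSm hTm lf Lf Ly hlf
    (hFbdd 1 h1mem) hSb hTb C hcov'
  -- transform the goal
  rw [integral_sub (hYint 1 h1mem) iQT]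
  rw [show ((∫ ω, Y 1 ω) - ∫ ω, F 1 ω / (∑ i ∈ Finset.Icc 2 (J + 1), F i ω)
        * ∑ i ∈ Finset.Icc 2 (J + 1), Y i ω) - ((∫ ω, Y 1 ω) - ∫ ω, Y0 1 ω)
      = -((∫ ω, F 1 ω / (∑ i ∈ Finset.Icc 2 (J + 1), F i ω)
        * ∑ i ∈ Finset.Icc 2 (J + 1), Y i ω) - ∫ ω, Y0 1 ω) from by ring, abs_neg, hY01eq]
  refine le_trans key ?_
  have hm1 : (J : ℝ) * lf ≤ ∫ ω, ∑ i ∈ Finset.Icc 2 (J + 1), F i ω := by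
    have := integral_mono_ae (integrable_const ((J : ℝ) * lf)) iS
      (by filter_upwards [hSb] with ω h; exact h.1)
    simpa using this
  have hnum0 : 0 ≤ (Lf - lf) / 2 * Real.sqrt (var (fun ω => ∑ i ∈ Finset.Icc 2 (J + 1), F i ω))
      + Lf / ((J : ℝ) * lf) * var (fun ω => ∑ i ∈ Finset.Icc 2 (J + 1), F i ω) :=
    add_nonneg (mul_nonneg (by linarith) (Real.sqrt_nonneg _))
      (mul_nonneg (div_nonneg (by linarith) hJlf.le) hvar0)
  have hstep1 : (J : ℝ) * Ly * ((Lf - lf) / 2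
        * Real.sqrt (var (fun ω => ∑ i ∈ Finset.Icc 2 (J + 1), F i ω))
        + Lf / ((J : ℝ) * lf) * var (fun ω => ∑ i ∈ Finset.Icc 2 (J + 1), F i ω))
        / (∫ ω, ∑ i ∈ Finset.Icc 2 (J + 1), F i ω) ^ 2
      ≤ (J : ℝ) * Ly * ((Lf - lf) / 2
        * Real.sqrt (var (fun ω => ∑ i ∈ Finset.Icc 2 (J + 1), F i ω))
        + Lf / ((J : ℝ) * lf) * var (fun ω => ∑ i ∈ Finset.Icc 2 (J + 1), F i ω))
        / ((J : ℝ) * lf) ^ 2 :=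
    div_le_div_of_nonneg_left (mul_nonneg (mul_nonneg hJ0.le hLy.le) hnum0)
      (by positivity) (pow_le_pow_left₀ hJlf.le hm1 2)
  have hstep2 : (J : ℝ) * Ly * ((Lf - lf) / 2
        * Real.sqrt (var (fun ω => ∑ i ∈ Finset.Icc 2 (J + 1), F i ω))
        + Lf / ((J : ℝ) * lf) * var (fun ω => ∑ i ∈ Finset.Icc 2 (J + 1), F i ω))
        / ((J : ℝ) * lf) ^ 2
      ≤ (J : ℝ) * Ly * ((Lf - lf) / 2 * ((Lf - lf) / 2 * Real.sqrt J + (J : ℝ) * Real.sqrt τ)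
        + Lf / ((J : ℝ) * lf) * ((J : ℝ) * (Lf - lf) ^ 2 / 4 + (J : ℝ) ^ 2 * τ))
        / ((J : ℝ) * lf) ^ 2 := by
    gcongr
    exact div_nonneg (by linarith) hJlf.le
  have hstep3 : (J : ℝ) * Ly * ((Lf - lf) / 2 * ((Lf - lf) / 2 * Real.sqrt J
        + (J : ℝ) * Real.sqrt τ)
        + Lf / ((J : ℝ) * lf) * ((J : ℝ) * (Lf - lf) ^ 2 / 4 + (J : ℝ) ^ 2 * τ))
        / ((J : ℝ) * lf) ^ 2
      = Ly * ((Lf - lf) ^ 2 / (4 * lf ^ 2) * (1 / Real.sqrt J)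
        + (Lf - lf) / (2 * lf ^ 2) * Real.sqrt τ
        + Lf / lf ^ 3 * ((Lf - lf) ^ 2 / (4 * J) + τ)) := by
    obtain ⟨s, hs⟩ : ∃ s, s = Real.sqrt (J : ℝ) := ⟨_, rfl⟩
    have hspos : 0 < s := hs ▸ Real.sqrt_pos.mpr hJ0
    have hs2 : s ^ 2 = (J : ℝ) := by rw [hs]; exact Real.sq_sqrt hJ0.le
    rw [← hs, ← hs2]
    field_simp
    ring
  linarith [hstep1, hstep2, hstep3, le_refl C]
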